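/- For any k ≥ 2 points d₁, …, d_k in ℝⁿ, the number of permutations π of {1, …, k} for which there exists a point q ∈ ℝⁿ with ‖q − d_{π(1)}‖₂ < ‖q − d_{π(2)}‖₂ < ⋯ < ‖q − d_{π(k)}‖₂ is at most k^{2n}. -/

import Mathlib

open Module

private lemma natCard_le_one (α : Type*) [Subsingleton α] : Nat.card α ≤ 1 := by
  have : Nat.card α ≤ Nat.card PUnit.{1} :=
    Nat.card_le_card_of_injective (fun _ => (PUnit.unit : PUnit.{1})) (fun a b _ => Subsingleton.elim a b)
  simpa using this

/-- The set of realizable all-strict sign vectors of a family of affine functionals,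
restricted to a finite index set `s` (and `false` off `s`). -/
def Reali {E ι : Type} [AddCommGroup E] [Module ℝ E] (f : ι → E → ℝ) (s : Finset ι) :
    Set (ι → Bool) :=
  {σ | (∀ j ∉ s, σ j = false) ∧ ∃ x : E, ∀ j ∈ s, if σ j then 0 < f j x else f j x < 0}

lemma reali_card_le : ∀ (N : ℕ) (E : Type) [AddCommGroup E] [Module ℝ E]
    [FiniteDimensional ℝ E], finrank ℝ E ≤ N →
    ∀ (ι : Type) [Fintype ι] [DecidableEq ι] (f : ι → E → ℝ),
      (∀ j, ∃ L : E →ₗ[ℝ] ℝ, ∀ x, f j x = L x + f j 0) →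
      ∀ s : Finset ι, Nat.card (Reali f s) ≤ (s.card + 1) ^ N := by
  intro N
  induction N with
  | zero =>
    intro E _ _ _ hE ι _ _ f hf s
    have hsub : Subsingleton E := finrank_zero_iff.mp (Nat.le_zero.mp hE)
    have : (Reali f s).Subsingleton := by
      rintro σ ⟨hσ0, x, hx⟩ τ ⟨hτ0, y, hy⟩
      funext j
      by_cases hj : j ∈ s
      · have hx' := hx j hj
        have hy' := hy j hj
        have hxy : x = y := Subsingleton.elim x y
        subst hxy
        cases hσ : σ j <;> cases hτ : τ j <;> simp_all <;> linarith
      · rw [hσ0 j hj, hτ0 j hj]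
    haveI := this.coe_sort
    simpa using natCard_le_one (Reali f s)
  | succ N ih =>
    intro E _ _ _ hE ι _ _ f hf s
    -- a general "affine on segments" computation
    have hlinecomb : ∀ (j : ι) (x y : E) (c : ℝ),
        f j (x + c • (y - x)) = f j x + c * (f j y - f j x) := by
      intro j x y c
      obtain ⟨Lj, hLj⟩ := hf j
      rw [hLj (x + c • (y - x)), hLj x, hLj y]
      simp only [map_add, map_smul, map_sub, smul_eq_mul]
      ring
    induction s using Finset.induction_on with
    | empty =>
      have : (Reali f ∅).Subsingleton := by
        rintro σ ⟨hσ0, -⟩ τ ⟨hτ0, -⟩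
        funext j
        rw [hσ0 j (by simp), hτ0 j (by simp)]
      haveI := this.coe_sort
      simpa using natCard_le_one (Reali f ∅)
    | insert _ _ ha iht =>
      rename_i a t
      classical
      -- the "doubly realizable" sign vectors
      set D : Set (ι → Bool) := {τ | τ ∈ Reali f t ∧
        (∃ x, f a x < 0 ∧ ∀ j ∈ t, if τ j then 0 < f j x else f j x < 0) ∧
        (∃ y, 0 < f a y ∧ ∀ j ∈ t, if τ j then 0 < f j y else f j y < 0)} with hD
      -- membership helpers
      have memB_of_false : ∀ σ ∈ Reali f (insert a t), σ a = false → σ ∈ Reali f t := by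
        rintro σ ⟨h0, x, hx⟩ hfa
        refine ⟨fun j hj => ?_, x, fun j hj => hx j (Finset.mem_insert_of_mem hj)⟩
        by_cases hja : j = a
        · rw [hja]; exact hfa
        · exact h0 j (by simp [hja, hj])
      have updmem : ∀ σ ∈ Reali f (insert a t), Function.update σ a false ∈ Reali f t := by
        rintro σ ⟨h0, x, hx⟩
        refine ⟨fun j hj => ?_, x, fun j hj => ?_⟩
        · by_cases hja : j = a
          · rw [hja]; simp
          · rw [Function.update_of_ne hja]
            exact h0 j (by simp [hja, hj])
        · have hja : j ≠ a := fun h => ha (h ▸ hj)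
          rw [Function.update_of_ne hja]
          exact hx j (Finset.mem_insert_of_mem hj)
      -- the key injection
      have key : Nat.card (Reali f (insert a t)) ≤
          Nat.card (Reali f t) + Nat.card D := by
        rw [← Nat.card_sum]
        apply Nat.card_le_card_of_injective
          (f := fun σ : Reali f (insert a t) =>
            if hσa : σ.1 a = true then
              (if hneg : Function.update σ.1 a false ∈ Reali f (insert a t) then
                Sum.inr (⟨Function.update σ.1 a false, by
                  refine ⟨updmem σ.1 σ.2 , ?_, ?_⟩
                  · obtain ⟨h0, x, hx⟩ := hneg
                    refine ⟨x, ?_, fun j hj => ?_⟩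
                    · have := hx a (Finset.mem_insert_self a t)
                      simpa using this
                    · have hja : j ≠ a := fun h => ha (h ▸ hj)
                      have := hx j (Finset.mem_insert_of_mem hj)
                      rwa [Function.update_of_ne hja] at this ⊢
                  · obtain ⟨h0, x, hx⟩ := σ.2
                    refine ⟨x, ?_, fun j hj => ?_⟩
                    · have := hx a (Finset.mem_insert_self a t)
                      rw [hσa] at this; simpa using this
                    · have hja : j ≠ a := fun h => ha (h ▸ hj)
                      rw [Function.update_of_ne hja]
                      exact hx j (Finset.mem_insert_of_mem hj)⟩ : D)
              else
                Sum.inl ⟨Function.update σ.1 a false, updmem σ.1 σ.2⟩)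
            else
              Sum.inl ⟨σ.1, memB_of_false σ.1 σ.2 (by simpa using hσa)⟩)
        rintro ⟨σ, hσ⟩ ⟨ρ, hρ⟩ h
        simp only at h
        have upd_inj : ∀ σ' ρ' : ι → Bool, σ' a = true → ρ' a = true →
            Function.update σ' a false = Function.update ρ' a false → σ' = ρ' := by
          intro σ' ρ' h1 h2 h3
          funext j
          by_cases hja : j = a
          · rw [hja, h1, h2]
          · have := congrFun h3 j
            rwa [Function.update_of_ne hja, Function.update_of_ne hja] at this
        by_cases h1 : σ a = true <;> by_cases h2 : ρ a = true
        · rw [dif_pos h1, dif_pos h2] at h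
          by_cases h3 : Function.update σ a false ∈ Reali f (insert a t) <;>
            by_cases h4 : Function.update ρ a false ∈ Reali f (insert a t)
          · rw [dif_pos h3, dif_pos h4] at h
            simp only [Sum.inr.injEq, Subtype.mk.injEq] at h
            exact Subtype.ext (upd_inj σ ρ h1 h2 h)
          · rw [dif_pos h3, dif_neg h4] at h
            exact absurd h (by simp)
          · rw [dif_neg h3, dif_pos h4] at h
            exact absurd h (by simp)
          · rw [dif_neg h3, dif_neg h4] at h
            simp only [Sum.inl.injEq, Subtype.mk.injEq] at h
            exact Subtype.ext (upd_inj σ ρ h1 h2 h)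
        · rw [dif_pos h1, dif_neg h2] at h
          by_cases h3 : Function.update σ a false ∈ Reali f (insert a t)
          · rw [dif_pos h3] at h
            exact absurd h (by simp)
          · rw [dif_neg h3] at h
            simp only [Sum.inl.injEq, Subtype.mk.injEq] at h
            exact absurd (h ▸ hρ) h3
        · rw [dif_neg h1, dif_pos h2] at h
          by_cases h4 : Function.update ρ a false ∈ Reali f (insert a t)
          · rw [dif_pos h4] at h
            exact absurd h (by simp)
          · rw [dif_neg h4] at h
            simp only [Sum.inl.injEq, Subtype.mk.injEq] at h
            exact absurd (h ▸ hσ) h4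
        · rw [dif_neg h1, dif_neg h2] at h
          simp only [Sum.inl.injEq, Subtype.mk.injEq] at h
          exact Subtype.ext h
      -- bound the doubly realizable part via the hyperplane
      have hDcard : Nat.card D ≤ (t.card + 1) ^ N := by
        rcases Set.eq_empty_or_nonempty D with hDe | ⟨τ0, hτ0⟩
        · rw [hDe]; simp
        · obtain ⟨-, ⟨x0, hx0, -⟩, ⟨y0, hy0, -⟩⟩ := hτ0
          obtain ⟨L, hL⟩ := hf a
          have hdiff : ∀ x y : E, f a y - f a x = L y - L x := by
            intro x y; rw [hL x, hL y]; ring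
          have hden0 : f a y0 - f a x0 > 0 := by linarith
          -- a point on the hyperplane
          set tstar : ℝ := (0 - f a x0) / (f a y0 - f a x0) with htstar
          set p : E := x0 + tstar • (y0 - x0) with hp
          have hfap : f a p = 0 := by
            rw [hp, hlinecomb a x0 y0 tstar, htstar,
              div_mul_cancel₀ _ (by linarith : f a y0 - f a x0 ≠ 0)]
            ring
          -- the kernel hyperplane
          have hrank' : finrank ℝ (LinearMap.ker L) ≤ N := by
            have hsurj : Function.Surjective L := by
              intro r
              have hLd : L y0 - L x0 > 0 := by rw [← hdiff x0 y0]; exact hden0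
              refine ⟨(r / (L y0 - L x0)) • (y0 - x0), ?_⟩
              rw [map_smul, map_sub, smul_eq_mul]
              field_simp
            have h1 : LinearMap.range L = ⊤ := LinearMap.range_eq_top.2 hsurj
            have h2 := LinearMap.finrank_range_add_finrank_ker L
            rw [h1, finrank_top, finrank_self] at h2
            omega
          set g : ι → LinearMap.ker L → ℝ := fun j v => f j (p + v) with hg
          have hgaff : ∀ j, ∃ M : LinearMap.ker L →ₗ[ℝ] ℝ, ∀ v, g j v = M v + g j 0 := by
            intro j
            obtain ⟨Lj, hLj⟩ := hf j
            refine ⟨Lj.comp (LinearMap.ker L).subtype, fun v => ?_⟩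
            have h0 : ((0 : LinearMap.ker L) : E) = 0 := rfl
            show f j (p + v) = Lj v + f j (p + ((0 : LinearMap.ker L) : E))
            rw [hLj (p + v), hLj (p + ((0 : LinearMap.ker L) : E)), h0, add_zero, map_add]
            ring
          have hinj : Nat.card D ≤ Nat.card (Reali g t) := by
            apply Nat.card_le_card_of_injective
              (f := fun τ : D => (⟨τ.1, by
                obtain ⟨⟨h0, -⟩, ⟨x, hxneg, hx⟩, ⟨y, hypos, hy⟩⟩ := τ.2
                refine ⟨h0, ?_⟩
                set c : ℝ := (0 - f a x) / (f a y - f a x) with hc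
                have hfaxy : f a y - f a x > 0 := by linarith
                have hc0 : 0 < c := div_pos (by linarith) hfaxy
                have hc1 : c < 1 := by
                  rw [hc, div_lt_one hfaxy]; linarith
                set z : E := x + c • (y - x) with hz
                have hzval : ∀ j, f j z = (1 - c) * f j x + c * f j y := by
                  intro j
                  rw [hz, hlinecomb j x y c]; ring
                have hfaz : f a z = 0 := by
                  rw [hz, hlinecomb a x y c, hc,
                    div_mul_cancel₀ _ (by linarith : f a y - f a x ≠ 0)]
                  ring
                have hmem : z - p ∈ LinearMap.ker L := by
                  rw [LinearMap.mem_ker]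
                  have h1 : f a z - f a p = L z - L p := hdiff p z
                  rw [hfaz, hfap] at h1
                  rw [map_sub]; linarith
                refine ⟨⟨z - p, hmem⟩, fun j hj => ?_⟩
                have hgz : g j ⟨z - p, hmem⟩ = f j z := by
                  simp only [hg]
                  congr 1
                  abel
                rw [hgz, hzval j]
                have hjx := hx j hj
                have hjy := hy j hj
                have h1c : (0:ℝ) < 1 - c := by linarith
                by_cases hτj : τ.1 j = true
                · rw [if_pos hτj] at hjx hjy ⊢
                  nlinarith [mul_pos h1c hjx, mul_pos hc0 hjy]
                · rw [if_neg hτj] at hjx hjy ⊢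
                  nlinarith [mul_pos h1c (neg_pos.mpr hjx), mul_pos hc0 (neg_pos.mpr hjy)]⟩
                : Reali g t))
            rintro ⟨τ, hτ⟩ ⟨τ', hτ'⟩ h
            simpa using Subtype.ext_iff.1 h
          calc Nat.card D ≤ Nat.card (Reali g t) := hinj
            _ ≤ (t.card + 1) ^ N := ih (LinearMap.ker L) hrank' ι g hgaff t
      -- combine
      rw [Finset.card_insert_of_notMem ha]
      calc Nat.card (Reali f (insert a t))
          ≤ Nat.card (Reali f t) + Nat.card D := key
        _ ≤ (t.card + 1) ^ (N + 1) + (t.card + 1) ^ N := Nat.add_le_add iht hDcard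
        _ = (t.card + 1) ^ N * (t.card + 2) := by ring
        _ ≤ (t.card + 2) ^ N * (t.card + 2) :=
            Nat.mul_le_mul_right _ (Nat.pow_le_pow_left (by omega) N)
        _ = (t.card + 1 + 1) ^ (N + 1) := by ring

theorem distance_permutations_card_le
    (k n : ℕ) (hk : 2 ≤ k) (d : Fin k → EuclideanSpace ℝ (Fin n)) :
    Nat.card {π : Equiv.Perm (Fin k) //
        ∃ q : EuclideanSpace ℝ (Fin n),
          StrictMono (fun i : Fin k => ‖q - d (π i)‖)} ≤ k ^ (2 * n) := by
  classical
  set ι := {p : Fin k × Fin k // p.1 < p.2} with hι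
  set f : ι → EuclideanSpace ℝ (Fin n) → ℝ := fun p q => ‖q - d p.1.2‖ ^ 2 - ‖q - d p.1.1‖ ^ 2 with hfdef
  have hf : ∀ p : ι, ∃ L : EuclideanSpace ℝ (Fin n) →ₗ[ℝ] ℝ, ∀ x, f p x = L x + f p 0 := by
    intro p
    refine ⟨(2:ℝ) • (innerSL ℝ (d p.1.1 - d p.1.2)).toLinearMap, fun x => ?_⟩
    simp only [hfdef, LinearMap.smul_apply, ContinuousLinearMap.coe_coe, innerSL_apply_apply,
      smul_eq_mul]
    rw [norm_sub_sq_real x (d p.1.2), norm_sub_sq_real x (d p.1.1),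
      norm_sub_sq_real 0 (d p.1.2), norm_sub_sq_real 0 (d p.1.1)]
    simp only [inner_sub_left, inner_zero_left, norm_zero]
    rw [real_inner_comm (d p.1.1) x, real_inner_comm (d p.1.2) x]
    ring
  -- the injection from realized permutations to realizable sign vectors
  have hstep : Nat.card {π : Equiv.Perm (Fin k) //
      ∃ q : EuclideanSpace ℝ (Fin n), StrictMono (fun i : Fin k => ‖q - d (π i)‖)} ≤
      Nat.card (Reali f Finset.univ) := by
    apply Nat.card_le_card_of_injective
      (f := fun π : {π : Equiv.Perm (Fin k) //
          ∃ q : EuclideanSpace ℝ (Fin n), StrictMono (fun i : Fin k => ‖q - d (π i)‖)} =>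
        (⟨fun p => decide (π.1.symm p.1.1 < π.1.symm p.1.2), by
          refine ⟨fun j hj => absurd (Finset.mem_univ j) hj, ?_⟩
          obtain ⟨q, hq⟩ := π.2
          refine ⟨q, fun p _ => ?_⟩
          have hkey : ∀ a b : Fin k, ‖q - d a‖ < ‖q - d b‖ ↔ π.1.symm a < π.1.symm b := by
            intro a b
            have := hq.lt_iff_lt (a := π.1.symm a) (b := π.1.symm b)
            simpa using this
          by_cases hlt : π.1.symm p.1.1 < π.1.symm p.1.2
          · rw [if_pos (by simpa using hlt)]
            have h1 := (hkey p.1.1 p.1.2).2 hlt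
            have h2 : ‖q - d p.1.1‖ ^ 2 < ‖q - d p.1.2‖ ^ 2 :=
              pow_lt_pow_left₀ h1 (norm_nonneg _) (by norm_num)
            simp only [hfdef]; linarith
          · rw [if_neg (by simpa using hlt)]
            have hne : π.1.symm p.1.2 ≠ π.1.symm p.1.1 := by
              intro hh
              exact (ne_of_lt p.2) (π.1.symm.injective hh).symm
            have hlt' : π.1.symm p.1.2 < π.1.symm p.1.1 :=
              lt_of_le_of_ne (not_lt.mp hlt) hne
            have h1 := (hkey p.1.2 p.1.1).2 hlt'
            have h2 : ‖q - d p.1.2‖ ^ 2 < ‖q - d p.1.1‖ ^ 2 :=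
              pow_lt_pow_left₀ h1 (norm_nonneg _) (by norm_num)
            simp only [hfdef]; linarith⟩ : Reali f Finset.univ))
    rintro ⟨π, hπ⟩ ⟨ρ, hρ⟩ h
    simp only [Subtype.mk.injEq] at h
    have hfun := Subtype.ext_iff.1 h
    have hmono : StrictMono (fun i => ρ.symm (π i)) := by
      intro i j hij
      have hab : π i ≠ π j := fun hh => (ne_of_lt hij) (π.injective hh)
      rcases lt_or_gt_of_ne hab with hab' | hab'
      · have := congrFun hfun (⟨(π i, π j), hab'⟩ : ι)
        simp only [decide_eq_decide] at this
        apply this.1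
        simpa using hij
      · have := congrFun hfun (⟨(π j, π i), hab'⟩ : ι)
        simp only [decide_eq_decide] at this
        have h1 : ¬ π.symm (π j) < π.symm (π i) := by
          simpa using not_lt.mpr (le_of_lt hij)
        have h2 := fun hh => h1 (this.2 hh)
        have hne : ρ.symm (π i) ≠ ρ.symm (π j) := fun hh => hab (ρ.symm.injective hh)
        exact lt_of_le_of_ne (not_lt.mp h2) hne
    have hrange : Set.range (fun i => ρ.symm (π i)) = Set.range (id : Fin k → Fin k) := by
      rw [Set.range_id]
      exact (ρ.symm.surjective.comp π.surjective).range_eq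
    have hid := (hmono.range_inj strictMono_id).1 hrange
    refine Subtype.ext (Equiv.ext fun i => ?_)
    have := congrFun hid i
    simp only [id_eq] at this
    have := congrArg ρ this
    simpa using this
  refine le_trans hstep (le_trans (reali_card_le n (EuclideanSpace ℝ (Fin n)) ?_ ι f hf Finset.univ) ?_)
  · simp [finrank_euclideanSpace_fin]
  · have hcard : (Finset.univ : Finset ι).card + 1 ≤ k ^ 2 := by
      have h1 : ((Finset.univ : Finset ι).card : ℕ) = Fintype.card ι := rfl
      have h2 : Fintype.card ι < Fintype.card (Fin k × Fin k) := by
        apply Fintype.card_subtype_lt (x := ((⟨0, by omega⟩ : Fin k), (⟨0, by omega⟩ : Fin k)))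
        simp
      have h3 : Fintype.card (Fin k × Fin k) = k * k := by simp
      rw [h1]
      nlinarith [h2, h3]
    calc ((Finset.univ : Finset ι).card + 1) ^ n ≤ (k ^ 2) ^ n := Nat.pow_le_pow_left hcard n
      _ = k ^ (2 * n) := by rw [← pow_mul]
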